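/- (Positive maximin information implies perfect distinguishability, Section III-C) If $s, s' \in \llbracket S\rrbracket$ lie in different equivalence classes of overlap connectedness (equivalently, in different blocks of the overlap partition of $\llbracket S\rrbracket$ — two such points exist precisely when $I_*(S;X) > 0$), then the conditional ranges of $X$ given $s$ and $s'$ are disjoint: $\llbracket X\mid s\rrbracket \cap \llbracket X\mid s'\rrbracket = \emptyset$, where $\llbracket X\mid s\rrbracket = \{X(\omega) : \omega \in \Omega,\ S(\omega) = s\}$. Thus an adversary observing $X$ can discriminate perfectly between $s$ and $s'$. -/
import Mathlib


/-- The conditional range `⟦S∣x⟧ = {S(ω) : ω ∈ Ω, X(ω) = x}`. -/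
def condRange {Ω 𝕊 𝕏 : Type*} (S : Ω → 𝕊) (X : Ω → 𝕏) (x : 𝕏) : Set 𝕊 :=
  {s | ∃ ω, X ω = x ∧ S ω = s}

/-- The conditional range `⟦X∣s⟧ = {X(ω) : ω ∈ Ω, S(ω) = s}`. -/
def condRangeX {Ω 𝕊 𝕏 : Type*} (S : Ω → 𝕊) (X : Ω → 𝕏) (s : 𝕊) : Set 𝕏 :=
  {x | ∃ ω, S ω = s ∧ X ω = x}

/-- Overlap connectedness. -/
def OverlapConn {Ω 𝕊 𝕏 : Type*} (S : Ω → 𝕊) (X : Ω → 𝕏) (s s' : 𝕊) : Prop :=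
  ∃ n : ℕ, ∃ xs : Fin (n + 1) → 𝕏,
    (∀ i, xs i ∈ Set.range X) ∧
    s ∈ condRange S X (xs 0) ∧ s' ∈ condRange S X (xs (Fin.last n)) ∧
    ∀ i : Fin n, (condRange S X (xs i.castSucc) ∩ condRange S X (xs i.succ)).Nonempty

/-- Positive maximin information implies perfect distinguishability (Section III-C): if
`s, s' ∈ ⟦S⟧` lie in different equivalence classes of overlap connectedness (i.e. they are not
overlap connected), then `⟦X∣s⟧ ∩ ⟦X∣s'⟧ = ∅`, so an adversary observing `X` can discriminate
perfectly between `s` and `s'`. -/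
theorem not_overlapConn_disjoint_condRangeX {Ω 𝕊 𝕏 : Type*} [Nonempty Ω] [Fintype 𝕊]
    [Fintype 𝕏] (S : Ω → 𝕊) (X : Ω → 𝕏) (s s' : 𝕊)
    (hs : s ∈ Set.range S) (hs' : s' ∈ Set.range S)
    (h : ¬ OverlapConn S X s s') :
    condRangeX S X s ∩ condRangeX S X s' = ∅ := by
  by_contra hne
  rcases Set.nonempty_iff_ne_empty.2 hne with ⟨x, ⟨ω, hSω, hXω⟩, ⟨ω', hSω', hXω'⟩⟩
  exact h ⟨0, fun _ => x, fun _ => ⟨ω, hXω⟩, ⟨ω, hXω, hSω⟩, ⟨ω', hXω', hSω'⟩,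
    fun i => i.elim0⟩
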